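/- Let χ be the indicator function of V∖K for a finite subset K of V, and let χ̄(e) = (χ(e⁺)+χ(e⁻))/2. Then for any finitely supported skewsymmetric φ, there exists a constant C > 0 (depending on K, c, r and the finite neighborhood K̃) such that ‖δ(χ̄φ)‖²_{ℓ²(V)} ≤ C(‖δφ‖²_{ℓ²(V)} + ‖φ‖²_{ℓ²(E_K̃)}), where E_K̃ is a finite edge set containing E_K and the edge boundary ∂E_K. -/

import Mathlib

open scoped BigOperators
open Function Filter

structure WGraph (V : Type*) where
  E : Set (V × V)
  symm : ∀ e ∈ E, (e.2, e.1) ∈ E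
  noloop : ∀ v : V, (v, v) ∉ E
  c : V → ℝ
  r : V × V → ℝ
  cpos : ∀ v, 0 < c v
  rpos : ∀ e, 0 < r e
  rsymm : ∀ e : V × V, r (e.2, e.1) = r e
  locfin : ∀ v : V, {e : V × V | e ∈ E ∧ e.1 = v}.Finite

variable {V : Type*}

/-- The difference operator `(df)(e) = f(e⁺) - f(e⁻)`. -/
def dOp (f : V → ℝ) : V × V → ℝ := fun e => f e.2 - f e.1

/-- The coboundary operator `(δφ)(x) = (1/c x) Σ_{e ∈ E, e⁺ = x} r e * φ e`. -/
noncomputable def deltaOp (G : WGraph V) (φ : V × V → ℝ) : V → ℝ :=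
  fun x => (G.c x)⁻¹ * ∑ᶠ e ∈ {e : V × V | e ∈ G.E ∧ e.2 = x}, G.r e * φ e

/-- Skewsymmetric function on oriented edges. -/
def Skew (φ : V × V → ℝ) : Prop := ∀ e : V × V, φ (e.2, e.1) = -φ e

/-- Finitely supported function. -/
def FinSupp {α β : Type*} [Zero β] (f : α → β) : Prop := (Function.support f).Finite

/-- Connectedness of a graph: any two vertices joined by a path of edges. -/
def WGraph.Connected (G : WGraph V) : Prop :=
  ∀ x y : V, ∃ n : ℕ, ∃ p : ℕ → V, p 0 = x ∧ p n = y ∧ ∀ i < n, (p i, p (i + 1)) ∈ G.E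

/-- Inner product on vertex functions: `Σ_x c x * f x * g x`. -/
noncomputable def innerV (G : WGraph V) (f g : V → ℝ) : ℝ := ∑ᶠ x : V, G.c x * (f x * g x)

/-- Inner product on edge functions: `(1/2) Σ_{e ∈ E} r e * φ e * ψ e`. -/
noncomputable def innerE (G : WGraph V) (φ ψ : V × V → ℝ) : ℝ :=
  (1 / 2) * ∑ᶠ e ∈ G.E, G.r e * (φ e * ψ e)

/-- Squared ℓ² norm of the pair `(f, φ)` restricted to vertices in `S` and edges in `T`. -/
noncomputable def sqnormOn (G : WGraph V) (S : Set V) (T : Set (V × V)) (f : V → ℝ)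
    (φ : V × V → ℝ) : ℝ :=
  (∑ᶠ x ∈ S, G.c x * f x ^ 2) + (1 / 2) * ∑ᶠ e ∈ T, G.r e * φ e ^ 2

/-- Edges of the subgraph induced by `K`. -/
def EK (G : WGraph V) (K : Set V) : Set (V × V) := {e ∈ G.E | e.1 ∈ K ∧ e.2 ∈ K}

/-- Edge boundary of `K`: edges with exactly one endpoint in `K`. -/
def edgeBdry (G : WGraph V) (K : Set V) : Set (V × V) :=
  {e ∈ G.E | (e.1 ∈ K ∧ e.2 ∉ K) ∨ (e.1 ∉ K ∧ e.2 ∈ K)}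

/-- `D = d + δ` is non-parabolic at infinity with respect to the finite subgraph on `K`. -/
noncomputable def NonParabolicAt (G : WGraph V) (K : Set V) : Prop :=
  ∀ VU : Set V, ∀ EU : Set (V × V), VU.Finite → EU.Finite →
    VU ⊆ Kᶜ → EU ⊆ G.E \ EK G K →
    ∃ C > 0, ∀ f : V → ℝ, ∀ φ : V × V → ℝ,
      FinSupp f → FinSupp φ → Skew φ →
      Function.support f ⊆ Kᶜ → Function.support φ ⊆ G.E \ EK G K →
      C * Real.sqrt (sqnormOn G VU EU f φ) ≤
        Real.sqrt (sqnormOn G Kᶜ (G.E \ EK G K) (deltaOp G φ) (dOp f))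

/-- `(Kt, Et)` is a (finite-subgraph) neighborhood of the subgraph on `K`. -/
def IsNbhd (G : WGraph V) (K Kt : Set V) (Et : Set (V × V)) : Prop :=
  Kt.Finite ∧ Et.Finite ∧ K ⊆ Kt ∧ EK G K ∪ edgeBdry G K ⊆ Et ∧ Et ⊆ G.E ∧
    ∀ e ∈ Et, e.1 ∈ Kt ∧ e.2 ∈ Kt

/-- Existence of a cycle in the graph. -/
def HasCycle (G : WGraph V) : Prop :=
  ∃ n : ℕ, 3 ≤ n ∧ ∃ p : ℕ → V, p n = p 0 ∧
    (∀ i j : ℕ, i < n → j < n → p i = p j → i = j) ∧ ∀ i < n, (p i, p (i + 1)) ∈ G.E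

/-- The outward edges of generation `m` in the two binary subtrees (`Ev` and `Bv` sides)
emanating from the vertex `x₀` of the triadic tree. -/
def genEdges (x₀ : V) (Ev Bv : ℕ → ℕ → V) : ℕ → Set (V × V)
  | 0 => {(x₀, Ev 0 0), (x₀, Bv 0 0)}
  | m + 1 => {p | ∃ k, k < 2 ^ (m + 1) ∧
      (p = (Ev m (k / 2), Ev (m + 1) k) ∨ p = (Bv m (k / 2), Bv (m + 1) k))}

/-- A set of oriented edges together with all reversed edges. -/
def symEdges (S : Set (V × V)) : Set (V × V) := {p | p ∈ S ∨ (p.2, p.1) ∈ S}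


open Classical in
/-- Helper: the coboundary as a finite sum over a containing finset. -/
theorem delta_eq_finsetSum (G : WGraph V) (ρ : V × V → ℝ) (F : Finset (V × V))
    (hFE : ↑F ⊆ G.E) (hρ : Function.support ρ ⊆ ↑F) (x : V) :
    deltaOp G ρ x = (G.c x)⁻¹ * ∑ e ∈ F.filter (fun e => e.2 = x), G.r e * ρ e := by
  unfold deltaOp
  congr 1
  apply finsum_mem_eq_sum_of_inter_support_eq
  ext e
  simp only [Set.mem_inter_iff, Set.mem_setOf_eq, Finset.coe_filter, Function.mem_mulSupport]
  constructor
  · rintro ⟨⟨heE, hex⟩, hne⟩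
    have : ρ e ≠ 0 := fun h => hne (by simp [h])
    exact ⟨⟨hρ this, hex⟩, hne⟩
  · rintro ⟨⟨heF, hex⟩, hne⟩
    exact ⟨⟨hFE heF, hex⟩, hne⟩

open Classical in
theorem stmt7 (G : WGraph V) (K : Set V) (hK : K.Finite) (Et : Set (V × V))
    (hEt : Et.Finite) (hsub : EK G K ∪ edgeBdry G K ⊆ Et) (hEtE : Et ⊆ G.E) :
    ∃ C > 0, ∀ φ : V × V → ℝ, FinSupp φ → Skew φ → Function.support φ ⊆ G.E →
      (∑ᶠ x : V, G.c x *
          deltaOp G (fun e =>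
            ((if e.2 ∈ K then (0 : ℝ) else 1) + (if e.1 ∈ K then (0 : ℝ) else 1)) / 2
              * φ e) x ^ 2) ≤
        C * ((∑ᶠ x : V, G.c x * deltaOp G φ x ^ 2) +
          (1 / 2) * ∑ᶠ e ∈ Et, G.r e * φ e ^ 2) := by
  classical
  set T : Finset (V × V) := hEt.toFinset with hT
  have hTcoe : (↑T : Set (V × V)) = Et := hEt.coe_toFinset
  obtain ⟨N, hN⟩ : ∃ N : ℝ, N = (T.card : ℝ) := ⟨_, rfl⟩
  obtain ⟨B, hB⟩ : ∃ B : ℝ, B = 1 + ∑ e ∈ T, (G.c e.2)⁻¹ * G.r e := ⟨_, rfl⟩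
  have hBpos : 0 < B := by
    have : 0 ≤ ∑ e ∈ T, (G.c e.2)⁻¹ * G.r e :=
      Finset.sum_nonneg fun e _ => le_of_lt (mul_pos (inv_pos.2 (G.cpos e.2)) (G.rpos e))
    linarith
  have hBbd : ∀ e ∈ T, (G.c e.2)⁻¹ * G.r e ≤ B := by
    intro e he
    have h1 : (G.c e.2)⁻¹ * G.r e ≤ ∑ e ∈ T, (G.c e.2)⁻¹ * G.r e :=
      Finset.single_le_sum (fun f _ => le_of_lt (mul_pos (inv_pos.2 (G.cpos f.2)) (G.rpos f))) he
    linarith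
  have hNnn : (0:ℝ) ≤ N := by rw [hN]; positivity
  refine ⟨2 + 4 * N * B, by positivity, ?_⟩
  intro φ hφ hsk hφE
  set m : V × V → ℝ := fun e =>
    ((if e.2 ∈ K then (0 : ℝ) else 1) + (if e.1 ∈ K then (0 : ℝ) else 1)) / 2 with hm
  set ψ : V × V → ℝ := fun e => (m e - 1) * φ e with hψ
  have hψT : Function.support ψ ⊆ ↑T := by
    intro e he
    have hφne : φ e ≠ 0 := by
      intro h; apply he; simp [hψ, h]
    have heE : e ∈ G.E := hφE hφne
    have hmne : m e ≠ 1 := by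
      intro h; apply he; simp [hψ, h]
    have hK' : e.1 ∈ K ∨ e.2 ∈ K := by
      by_contra hc
      push_neg at hc
      apply hmne
      simp [hm, hc.1, hc.2]
    rw [hTcoe]
    rcases hK' with h1 | h2
    · by_cases h2 : e.2 ∈ K
      · exact hsub (Or.inl ⟨heE, h1, h2⟩)
      · exact hsub (Or.inr ⟨heE, Or.inl ⟨h1, h2⟩⟩)
    · by_cases h1 : e.1 ∈ K
      · exact hsub (Or.inl ⟨heE, h1, h2⟩)
      · exact hsub (Or.inr ⟨heE, Or.inr ⟨h1, h2⟩⟩)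
  set F : Finset (V × V) := hφ.toFinset ∪ T with hF
  have hFE : (↑F : Set (V × V)) ⊆ G.E := by
    intro e he
    rw [hF, Finset.coe_union] at he
    rcases he with h | h
    · exact hφE (hφ.mem_toFinset.1 h)
    · exact hEtE (by rwa [hTcoe] at h)
  have hφF : Function.support φ ⊆ ↑F := by
    intro e he
    rw [hF, Finset.coe_union]
    exact Or.inl (hφ.mem_toFinset.2 he)
  have hψF : Function.support ψ ⊆ ↑F := fun e he => by
    rw [hF, Finset.coe_union]; exact Or.inr (hψT he)
  have hmφF : Function.support (fun e => m e * φ e) ⊆ ↑F := by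
    intro e he
    apply hφF
    intro h; apply he; simp [h]
  set X : Finset V := F.image Prod.snd with hX
  -- pointwise splitting
  have hdelta : ∀ x, deltaOp G (fun e => m e * φ e) x = deltaOp G φ x + deltaOp G ψ x := by
    intro x
    rw [delta_eq_finsetSum G _ F hFE hmφF x, delta_eq_finsetSum G φ F hFE hφF x,
      delta_eq_finsetSum G ψ F hFE hψF x, ← mul_add, ← Finset.sum_add_distrib]
    congr 1
    apply Finset.sum_congr rfl
    intro e _
    simp only [hψ]; ring
  -- support facts
  have hsupδ : ∀ (ρ : V × V → ℝ), Function.support ρ ⊆ ↑F →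
      Function.support (fun x => G.c x * deltaOp G ρ x ^ 2) ⊆ ↑X := by
    intro ρ hρ x hx
    have hne : deltaOp G ρ x ≠ 0 := by
      intro h; apply hx; simp [h]
    rw [delta_eq_finsetSum G ρ F hFE hρ x] at hne
    have : (F.filter (fun e => e.2 = x)).Nonempty := by
      by_contra hc
      rw [Finset.not_nonempty_iff_eq_empty] at hc
      rw [hc] at hne; simp at hne
    obtain ⟨e, he⟩ := this
    simp only [Finset.mem_filter] at he
    rw [hX]
    simp only [Finset.coe_image, Set.mem_image]
    exact ⟨e, he.1, he.2⟩
  -- convert finsums to finset sums over X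
  have hL : (∑ᶠ x : V, G.c x * deltaOp G (fun e => m e * φ e) x ^ 2)
      = ∑ x ∈ X, G.c x * deltaOp G (fun e => m e * φ e) x ^ 2 :=
    finsum_eq_finset_sum_of_support_subset _ (hsupδ _ hmφF)
  have hA : (∑ᶠ x : V, G.c x * deltaOp G φ x ^ 2)
      = ∑ x ∈ X, G.c x * deltaOp G φ x ^ 2 :=
    finsum_eq_finset_sum_of_support_subset _ (hsupδ _ hφF)
  have hR2 : (∑ᶠ e ∈ Et, G.r e * φ e ^ 2) = ∑ e ∈ T, G.r e * φ e ^ 2 := by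
    rw [← hTcoe]; exact finsum_mem_coe_finset _ _
  -- bound on the ψ part
  have hψbd : ∀ x ∈ X, G.c x * deltaOp G ψ x ^ 2
      ≤ N * B * ∑ e ∈ T.filter (fun e => e.2 = x), G.r e * ψ e ^ 2 := by
    intro x _
    have hψTset : Function.support ψ ⊆ (↑T : Set (V × V)) := hψT
    have hTE : (↑T : Set (V × V)) ⊆ G.E := by rw [hTcoe]; exact hEtE
    rw [delta_eq_finsetSum G ψ T hTE hψTset x]
    set Tx := T.filter (fun e => e.2 = x) with hTx
    have hcs : (∑ e ∈ Tx, G.r e * ψ e) ^ 2 ≤ N * ∑ e ∈ Tx, (G.r e * ψ e) ^ 2 := by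
      have h1 := sq_sum_le_card_mul_sum_sq (s := Tx) (f := fun e => G.r e * ψ e)
      have h2 : (Tx.card : ℝ) ≤ N := by
        rw [hN]; exact_mod_cast Finset.card_filter_le _ _
      calc (∑ e ∈ Tx, G.r e * ψ e) ^ 2 ≤ (Tx.card : ℝ) * ∑ e ∈ Tx, (G.r e * ψ e) ^ 2 := h1
        _ ≤ N * ∑ e ∈ Tx, (G.r e * ψ e) ^ 2 := by
            apply mul_le_mul_of_nonneg_right h2
            exact Finset.sum_nonneg fun e _ => sq_nonneg _
    have hcx : 0 < G.c x := G.cpos x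
    have hterm : ∀ e ∈ Tx, (G.c x)⁻¹ * (G.r e * ψ e) ^ 2 ≤ B * (G.r e * ψ e ^ 2) := by
      intro e he
      rw [hTx, Finset.mem_filter] at he
      have hex : e.2 = x := he.2
      have h1 : (G.c x)⁻¹ * (G.r e * ψ e) ^ 2 = ((G.c e.2)⁻¹ * G.r e) * (G.r e * ψ e ^ 2) := by
        rw [hex]; ring
      rw [h1]
      apply mul_le_mul_of_nonneg_right (hBbd e he.1)
      exact mul_nonneg (le_of_lt (G.rpos e)) (sq_nonneg _)
    calc G.c x * ((G.c x)⁻¹ * ∑ e ∈ Tx, G.r e * ψ e) ^ 2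
        = (G.c x)⁻¹ * (∑ e ∈ Tx, G.r e * ψ e) ^ 2 := by
          have hne := (G.cpos x).ne'
          field_simp
      _ ≤ (G.c x)⁻¹ * (N * ∑ e ∈ Tx, (G.r e * ψ e) ^ 2) := by
          apply mul_le_mul_of_nonneg_left hcs (le_of_lt (inv_pos.2 hcx))
      _ = N * ∑ e ∈ Tx, (G.c x)⁻¹ * (G.r e * ψ e) ^ 2 := by
          simp only [Finset.mul_sum]
          exact Finset.sum_congr rfl fun e _ => by ring
      _ ≤ N * ∑ e ∈ Tx, B * (G.r e * ψ e ^ 2) := by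
          apply mul_le_mul_of_nonneg_left _ hNnn
          exact Finset.sum_le_sum hterm
      _ = N * B * ∑ e ∈ Tx, G.r e * ψ e ^ 2 := by
          rw [← Finset.mul_sum]; ring
  have hfib : ∑ x ∈ X, ∑ e ∈ T.filter (fun e => e.2 = x), G.r e * ψ e ^ 2
      = ∑ e ∈ T, G.r e * ψ e ^ 2 := by
    apply Finset.sum_fiberwise_of_maps_to
    intro e he
    rw [hX]
    apply Finset.mem_image_of_mem
    rw [hF]; exact Finset.mem_union_right _ he
  have hψφ : ∀ e, ψ e ^ 2 ≤ φ e ^ 2 := by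
    intro e
    have hcases : m e = 0 ∨ m e = 1 / 2 ∨ m e = 1 := by
      rw [hm]
      rcases Classical.em (e.2 ∈ K) with h2 | h2 <;> rcases Classical.em (e.1 ∈ K) with h1 | h1 <;>
        simp [h1, h2] <;> norm_num
    have : (m e - 1) ^ 2 ≤ 1 := by
      rcases hcases with h | h | h <;> rw [h] <;> norm_num
    calc ψ e ^ 2 = (m e - 1) ^ 2 * φ e ^ 2 := by rw [hψ]; ring
      _ ≤ 1 * φ e ^ 2 := mul_le_mul_of_nonneg_right this (sq_nonneg _)
      _ = φ e ^ 2 := one_mul _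
  have hsum_ψ : ∑ e ∈ T, G.r e * ψ e ^ 2 ≤ ∑ e ∈ T, G.r e * φ e ^ 2 := by
    apply Finset.sum_le_sum
    intro e _
    exact mul_le_mul_of_nonneg_left (hψφ e) (le_of_lt (G.rpos e))
  -- assemble
  have hApos : 0 ≤ ∑ x ∈ X, G.c x * deltaOp G φ x ^ 2 :=
    Finset.sum_nonneg fun x _ => mul_nonneg (le_of_lt (G.cpos x)) (sq_nonneg _)
  have hR2pos : 0 ≤ ∑ e ∈ T, G.r e * φ e ^ 2 :=
    Finset.sum_nonneg fun e _ => mul_nonneg (le_of_lt (G.rpos e)) (sq_nonneg _)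
  have hmain : ∑ x ∈ X, G.c x * deltaOp G (fun e => m e * φ e) x ^ 2
      ≤ 2 * (∑ x ∈ X, G.c x * deltaOp G φ x ^ 2)
        + 2 * (N * B * ∑ e ∈ T, G.r e * φ e ^ 2) := by
    have step1 : ∑ x ∈ X, G.c x * deltaOp G (fun e => m e * φ e) x ^ 2
        ≤ ∑ x ∈ X, (2 * (G.c x * deltaOp G φ x ^ 2) + 2 * (G.c x * deltaOp G ψ x ^ 2)) := by
      apply Finset.sum_le_sum
      intro x _
      rw [hdelta x]
      have hcx := G.cpos x
      nlinarith [sq_nonneg (deltaOp G φ x - deltaOp G ψ x), hcx.le,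
        mul_nonneg hcx.le (sq_nonneg (deltaOp G φ x - deltaOp G ψ x))]
    have step2 : ∑ x ∈ X, G.c x * deltaOp G ψ x ^ 2
        ≤ N * B * ∑ e ∈ T, G.r e * φ e ^ 2 := by
      calc ∑ x ∈ X, G.c x * deltaOp G ψ x ^ 2
          ≤ ∑ x ∈ X, N * B * ∑ e ∈ T.filter (fun e => e.2 = x), G.r e * ψ e ^ 2 :=
            Finset.sum_le_sum hψbd
        _ = N * B * ∑ e ∈ T, G.r e * ψ e ^ 2 := by rw [← Finset.mul_sum, hfib]
        _ ≤ N * B * ∑ e ∈ T, G.r e * φ e ^ 2 := by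
            apply mul_le_mul_of_nonneg_left hsum_ψ (mul_nonneg hNnn hBpos.le)
    rw [Finset.sum_add_distrib, ← Finset.mul_sum, ← Finset.mul_sum] at step1
    linarith
  rw [hL, hA, hR2]
  have hNB : 0 ≤ N * B := mul_nonneg hNnn hBpos.le
  nlinarith [mul_nonneg hNB hApos, mul_nonneg hNB hR2pos]
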